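/- arXiv:1704.02450 — 2 statements merged into one kernel-verified Lean document; each statement's English description precedes it below -/
import Mathlib

section
/- For every n×n real positive semidefinite matrix A and every n×n real positive definite matrix Γ, one has tr(Γ⁻¹ A) + tr(Γ) ≥ 2 tr(A^{1/2}). -/
open Matrix
open scoped ComplexOrder
noncomputable def Matrix.PosSemidef.sqrt {n : Type*} [Fintype n] [DecidableEq n]
    {𝕜 : Type*} [RCLike 𝕜] {A : Matrix n n 𝕜} (hA : A.PosSemidef) : Matrix n n 𝕜 :=
  hA.1.eigenvectorUnitary.1 * diagonal ((↑) ∘ (√·) ∘ hA.1.eigenvalues) *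
    (star hA.1.eigenvectorUnitary : Matrix n n 𝕜)

lemma Matrix.PosSemidef.posSemidef_sqrt {n : ℕ} {A : Matrix (Fin n) (Fin n) ℝ}
    (hA : A.PosSemidef) : hA.sqrt.PosSemidef := by
  unfold Matrix.PosSemidef.sqrt
  have hD : (diagonal ((↑) ∘ (√·) ∘ hA.1.eigenvalues) : Matrix (Fin n) (Fin n) ℝ).PosSemidef :=
    posSemidef_diagonal_iff.mpr fun i => by simp [Real.sqrt_nonneg]
  have := hD.mul_mul_conjTranspose_same (hA.1.eigenvectorUnitary : Matrix (Fin n) (Fin n) ℝ)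
  simpa [star_eq_conjTranspose, Function.comp_def] using this

lemma Matrix.PosSemidef.sqrt_mul_self {n : ℕ} {A : Matrix (Fin n) (Fin n) ℝ}
    (hA : A.PosSemidef) : hA.sqrt * hA.sqrt = A := by
  unfold Matrix.PosSemidef.sqrt
  have key : ∀ (U S : Matrix (Fin n) (Fin n) ℝ), star U * U = 1 →
      U * S * star U * (U * S * star U) = U * (S * S) * star U := by
    intro U S h
    simp only [Matrix.mul_assoc]
    rw [← Matrix.mul_assoc (star U) U, h, Matrix.one_mul]
  have hDD : (diagonal (RCLike.ofReal ∘ (√·) ∘ hA.1.eigenvalues) : Matrix (Fin n) (Fin n) ℝ) *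
      diagonal (RCLike.ofReal ∘ (√·) ∘ hA.1.eigenvalues) = diagonal (RCLike.ofReal ∘ hA.1.eigenvalues) := by
    rw [diagonal_mul_diagonal]
    congr 1; funext i
    simp [Real.mul_self_sqrt (hA.eigenvalues_nonneg i)]
  rw [key _ _ (Unitary.coe_star_mul_self _), hDD]
  conv_rhs => rw [hA.1.spectral_theorem]
  simp

private lemma psd_trace_nonneg {n : ℕ} {M : Matrix (Fin n) (Fin n) ℝ}
    (hM : M.PosSemidef) : 0 ≤ M.trace := by
  rw [Matrix.trace]
  apply Finset.sum_nonneg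
  intro i _
  simpa using hM.2 (Finsupp.single i 1)

/-- **Matrix AM–GM inequality** (Lemma 1 of the paper, lower-bound form for a PSD matrix):
for every `n × n` real positive semidefinite matrix `A` and every positive definite `Γ`,
`tr (Γ⁻¹ * A) + tr Γ ≥ 2 * tr (A ^ (1/2))`, where `A ^ (1/2)` is the unique positive
semidefinite square root of `A`. -/
theorem trace_inv_mul_add_trace_ge_two_trace_sqrt
    {n : ℕ} (A Γ : Matrix (Fin n) (Fin n) ℝ)
    (hA : A.PosSemidef) (hΓ : Γ.PosDef) :
    (Γ⁻¹ * A).trace + Γ.trace ≥ 2 * hA.sqrt.trace := by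
  set B := hA.sqrt with hB
  have hBH : Bᴴ = B := hA.posSemidef_sqrt.isHermitian
  have hMH : (B - Γ)ᴴ = B - Γ := by
    rw [conjTranspose_sub, hBH, hΓ.isHermitian]
  have hpsd : ((B - Γ) * Γ⁻¹ * (B - Γ)).PosSemidef := by
    have := (hΓ.posSemidef.inv).mul_mul_conjTranspose_same (B - Γ)
    rwa [hMH] at this
  have h0 : 0 ≤ ((B - Γ) * Γ⁻¹ * (B - Γ)).trace := psd_trace_nonneg hpsd
  have hΓinv : Γ * Γ⁻¹ = 1 := mul_nonsing_inv Γ hΓ.det_pos.ne'.isUnit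
  have hΓinv' : Γ⁻¹ * Γ = 1 := nonsing_inv_mul Γ hΓ.det_pos.ne'.isUnit
  have hexp : ((B - Γ) * Γ⁻¹ * (B - Γ)).trace
      = (Γ⁻¹ * A).trace + Γ.trace - 2 * B.trace := by
    have h1 : (B - Γ) * Γ⁻¹ * (B - Γ)
        = B * Γ⁻¹ * B - B * (Γ⁻¹ * Γ) - (Γ * Γ⁻¹) * B + Γ * Γ⁻¹ * Γ := by
      noncomm_ring
    rw [h1, hΓinv, hΓinv']
    have h2 : (B * Γ⁻¹ * B).trace = (Γ⁻¹ * A).trace := by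
      rw [← Matrix.trace_mul_cycle Γ⁻¹ B B, mul_assoc,
        show B * B = A from hA.sqrt_mul_self]
    simp only [trace_add, trace_sub, h2, mul_one, one_mul, Matrix.mul_one]
    ring
  linarith
end

section
/- Let M be a real m×n matrix such that M Mᵀ is positive definite. Then tr((M Mᵀ)^{1/2}) is the least element of the set { ½ (tr(Mᵀ Γ⁻¹ M) + tr(Γ)) : Γ an m×m real positive definite matrix }. -/
open Matrix
open scoped MatrixOrder

lemma psd_trace_nonneg_s4 {k : ℕ} {A : Matrix (Fin k) (Fin k) ℝ} (hA : A.PosSemidef) :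
    0 ≤ A.trace := by
  exact hA.trace_nonneg

lemma sqrt_posDef {k n : ℕ} {M : Matrix (Fin k) (Fin n) ℝ} (h : (M * Mᵀ).PosDef) :
    (CFC.sqrt (M * Mᵀ)).PosDef := by
  exact (IsStrictlyPositive.sqrt (M * Mᵀ) h.isStrictlyPositive).posDef

/-- Lemma 1 of the paper, combined form: if `M Mᵀ` is positive definite, then
`tr ((M Mᵀ) ^ (1/2))` (the trace norm of `M`) is the least element of the set of values
`½ (tr (Mᵀ Γ⁻¹ M) + tr Γ)` as `Γ` ranges over the `m × m` real positive definite matrices. -/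
theorem isLeast_trace_norm_variational
    {m n : ℕ} (M : Matrix (Fin m) (Fin n) ℝ) (h : (M * Mᵀ).PosDef) :
    IsLeast {x : ℝ | ∃ Γ : Matrix (Fin m) (Fin m) ℝ, Γ.PosDef ∧
        x = (1 / 2 : ℝ) * ((Mᵀ * Γ⁻¹ * M).trace + Γ.trace)}
      (CFC.sqrt (M * Mᵀ)).trace := by
  set S := CFC.sqrt (M * Mᵀ) with hSdef
  have hS : S.PosSemidef := Matrix.nonneg_iff_posSemidef.mp (CFC.sqrt_nonneg _)
  have hSpd : S.PosDef := sqrt_posDef h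
  have hSS : S * S = M * Mᵀ := CFC.sqrt_mul_sqrt_self _ h.posSemidef.nonneg
  have hSsym : Sᵀ = S := hS.1
  -- key trace identity for any invertible Γ
  have key : ∀ Γ : Matrix (Fin m) (Fin m) ℝ, Γ.PosDef →
      (Mᵀ * Γ⁻¹ * M).trace = (S * Γ⁻¹ * S).trace := by
    intro Γ hΓ
    calc (Mᵀ * Γ⁻¹ * M).trace = (Γ⁻¹ * (M * Mᵀ)).trace := by
          rw [Matrix.trace_mul_comm (Mᵀ * Γ⁻¹) M, ← Matrix.mul_assoc,
            Matrix.trace_mul_comm (M * Mᵀ) Γ⁻¹]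
      _ = (Γ⁻¹ * (S * S)).trace := by rw [hSS]
      _ = (S * Γ⁻¹ * S).trace := by
          rw [← Matrix.mul_assoc, Matrix.trace_mul_comm, Matrix.mul_assoc]
  constructor
  · -- membership: take Γ = S
    refine ⟨S, hSpd, ?_⟩
    have hdet : IsUnit S.det := hSpd.det_pos.ne'.isUnit
    have h2 : S * S⁻¹ = 1 := Matrix.mul_nonsing_inv S hdet
    have heq : (Mᵀ * S⁻¹ * M).trace = S.trace := by
      rw [key S hSpd, h2, Matrix.one_mul]
    rw [heq]; ring
  · -- lower bound
    rintro x ⟨Γ, hΓ, rfl⟩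
    have hdet : IsUnit Γ.det := hΓ.det_pos.ne'.isUnit
    have h1 : Γ⁻¹ * Γ = 1 := Matrix.nonsing_inv_mul Γ hdet
    have h2 : Γ * Γ⁻¹ = 1 := Matrix.mul_nonsing_inv Γ hdet
    have hΓsym : Γᵀ = Γ := hΓ.1
    have hPSD : ((S - Γ) * Γ⁻¹ * (S - Γ)ᴴ).PosSemidef :=
      hΓ.inv.posSemidef.mul_mul_conjTranspose_same (S - Γ)
    have hct : (S - Γ)ᴴ = S - Γ := by
      rw [Matrix.conjTranspose_sub, hS.1, hΓ.1]
    rw [hct] at hPSD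
    have hexp : (S - Γ) * Γ⁻¹ * (S - Γ) = S * Γ⁻¹ * S - S - S + Γ := by
      have : (S - Γ) * Γ⁻¹ * (S - Γ)
          = S * Γ⁻¹ * S - S * (Γ⁻¹ * Γ) - (Γ * Γ⁻¹) * S + Γ * Γ⁻¹ * Γ := by
        noncomm_ring
      rw [this, h1, h2, Matrix.mul_one, Matrix.one_mul, Matrix.one_mul]
    have htr : 0 ≤ (S * Γ⁻¹ * S).trace - S.trace - S.trace + Γ.trace := by
      have := psd_trace_nonneg_s4 hPSD
      rwa [hexp, Matrix.trace_add, Matrix.trace_sub, Matrix.trace_sub] at this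
    rw [key Γ hΓ]
    linarith
end
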